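/- Let ρ : [0,1] → ℝ be a nonnegative integrable function and let 0 < M ≤ K be constants with M ≤ ∫₀¹ ρ(x) dx ≤ K. Then for any r > 0 and C̄ > 0 there exists a constant C = C(M, K, r, C̄) > 0 such that every positive v ∈ C¹([0,1]) with ∫₀¹ ρ(x) |v(x)| dx ≤ C̄ satisfies sup_{x∈[0,1]} v(x)^r ≤ C (∫₀¹ ((v^r)'(x))² dx)^{1/2} + C. -/

import Mathlib

open Real MeasureTheory Set

/-- Lemma 1.4 (ii): if `ρ ≥ 0` is integrable on `[0,1]` with
`0 < M ≤ ∫₀¹ ρ ≤ K`, then for any `r > 0` and `C̄ > 0` there is a constant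
`C = C(M, K, r, C̄) > 0` such that every positive `v ∈ C¹([0,1])` with
`∫₀¹ ρ |v| ≤ C̄` satisfies `sup_{[0,1]} v^r ≤ C ‖(v^r)'‖_{L²(0,1)} + C`. -/
theorem stmt1 (ρ : ℝ → ℝ) (M K : ℝ) (hM : 0 < M) (hMK : M ≤ K)
    (hρ_nonneg : ∀ x ∈ Set.Icc (0:ℝ) 1, 0 ≤ ρ x)
    (hρ_int : IntervalIntegrable ρ MeasureTheory.volume 0 1)
    (hmass_low : M ≤ ∫ x in (0:ℝ)..1, ρ x)
    (hmass_up : (∫ x in (0:ℝ)..1, ρ x) ≤ K)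
    (r Cbar : ℝ) (hr : 0 < r) (hCbar : 0 < Cbar) :
    ∃ C : ℝ, 0 < C ∧ ∀ v : ℝ → ℝ, ContDiffOn ℝ 1 v (Set.Icc 0 1) →
      (∀ x ∈ Set.Icc (0:ℝ) 1, 0 < v x) →
      (∫ x in (0:ℝ)..1, ρ x * |v x|) ≤ Cbar →
      ∀ x ∈ Set.Icc (0:ℝ) 1,
        v x ^ r ≤ C * Real.sqrt (∫ y in (0:ℝ)..1,
            (derivWithin (fun z => v z ^ r) (Set.Icc 0 1) y) ^ 2) + C := by
  refine ⟨max ((Cbar / M) ^ r) 1, lt_of_lt_of_le one_pos (le_max_right _ _), ?_⟩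
  intro v hv hvpos hvint x hx
  have h01 : (0:ℝ) ≤ 1 := zero_le_one
  have huIcc : Set.uIcc (0:ℝ) 1 = Set.Icc 0 1 := Set.uIcc_of_le h01
  set g : ℝ → ℝ := fun z => v z ^ r with hgdef
  set D : ℝ → ℝ := derivWithin g (Set.Icc 0 1) with hDdef
  have hud : UniqueDiffOn ℝ (Set.Icc (0:ℝ) 1) := uniqueDiffOn_Icc one_pos
  have hg : ContDiffOn ℝ 1 g (Set.Icc 0 1) :=
    hv.rpow_const_of_ne fun x hx => (hvpos x hx).ne'
  have hDcont : ContinuousOn D (Set.Icc 0 1) :=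
    hg.continuousOn_derivWithin hud le_rfl
  have hDint : IntervalIntegrable D volume 0 1 := by
    apply ContinuousOn.intervalIntegrable; rwa [huIcc]
  have hDabsint : IntervalIntegrable (fun y => |D y|) volume 0 1 := hDint.abs
  have hD2int : IntervalIntegrable (fun y => D y ^ 2) volume 0 1 := by
    apply ContinuousOn.intervalIntegrable; rw [huIcc]; exact hDcont.pow 2
  -- the minimum point of v
  obtain ⟨x₀, hx₀, hmin⟩ := isCompact_Icc.exists_isMinOn (Set.nonempty_Icc.2 h01)
      hv.continuousOn
  have hvx₀pos := hvpos x₀ hx₀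
  -- v x₀ ≤ Cbar / M
  have key1 : v x₀ ≤ Cbar / M := by
    rw [le_div_iff₀ hM]
    have h1 : (∫ x in (0:ℝ)..1, ρ x * v x₀) ≤ ∫ x in (0:ℝ)..1, ρ x * |v x| := by
      refine intervalIntegral.integral_mono_on h01 (hρ_int.mul_const _) ?_ ?_
      · exact hρ_int.mul_continuousOn (by rw [huIcc]; exact hv.continuousOn.abs)
      · intro y hy
        exact mul_le_mul_of_nonneg_left ((hmin hy).trans (le_abs_self _)) (hρ_nonneg y hy)
    have h2 : (∫ x in (0:ℝ)..1, ρ x * v x₀) = (∫ x in (0:ℝ)..1, ρ x) * v x₀ :=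
      intervalIntegral.integral_mul_const _ _
    calc v x₀ * M ≤ v x₀ * ∫ x in (0:ℝ)..1, ρ x :=
          mul_le_mul_of_nonneg_left hmass_low hvx₀pos.le
      _ = (∫ x in (0:ℝ)..1, ρ x) * v x₀ := mul_comm _ _
      _ ≤ ∫ x in (0:ℝ)..1, ρ x * |v x| := h2 ▸ h1
      _ ≤ Cbar := hvint
  have hgx₀ : g x₀ ≤ (Cbar / M) ^ r :=
    Real.rpow_le_rpow hvx₀pos.le key1 hr.le
  -- FTC on subintervals
  have hftc : ∀ a ∈ Set.Icc (0:ℝ) 1, ∀ b ∈ Set.Icc (0:ℝ) 1, a ≤ b →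
      (∫ y in a..b, D y) = g b - g a := by
    intro a ha b hb hab
    refine intervalIntegral.integral_eq_sub_of_hasDeriv_right_of_le hab
      (hg.continuousOn.mono (Set.Icc_subset_Icc ha.1 hb.2)) ?_
      (hDint.mono_set (by rw [huIcc, Set.uIcc_of_le hab]; exact Set.Icc_subset_Icc ha.1 hb.2))
    intro y hy
    have hy01 : y ∈ Set.Ioo (0:ℝ) 1 := ⟨lt_of_le_of_lt ha.1 hy.1, lt_of_lt_of_le hy.2 hb.2⟩
    have hdiff : DifferentiableWithinAt ℝ g (Set.Icc 0 1) y :=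
      hg.differentiableOn one_ne_zero y (Set.Ioo_subset_Icc_self hy01)
    exact ((hdiff.hasDerivWithinAt.hasDerivAt
      (Icc_mem_nhds hy01.1 hy01.2)).hasDerivWithinAt)
  -- |D| integral dominates increments
  have habs : ∀ a ∈ Set.Icc (0:ℝ) 1, ∀ b ∈ Set.Icc (0:ℝ) 1, a ≤ b →
      |∫ y in a..b, D y| ≤ ∫ y in (0:ℝ)..1, |D y| := by
    intro a ha b hb hab
    calc |∫ y in a..b, D y| ≤ ∫ y in a..b, |D y| :=
          intervalIntegral.abs_integral_le_integral_abs hab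
      _ ≤ ∫ y in (0:ℝ)..1, |D y| :=
          intervalIntegral.integral_mono_interval ha.1 hab hb.2
            (Filter.Eventually.of_forall fun y => abs_nonneg _) hDabsint
  have hmain : g x ≤ g x₀ + ∫ y in (0:ℝ)..1, |D y| := by
    rcases le_total x₀ x with h | h
    · have h1 := hftc x₀ hx₀ x hx h
      have h2 := habs x₀ hx₀ x hx h
      have h3 := le_abs_self (∫ y in x₀..x, D y)
      linarith
    · have h1 := hftc x hx x₀ hx₀ h
      have h2 := habs x hx x₀ hx₀ h
      have h3 := neg_abs_le (∫ y in x..x₀, D y)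
      linarith
  -- Cauchy-Schwarz-type bound : ∫ |D| ≤ sqrt (∫ D²)
  set S : ℝ := ∫ y in (0:ℝ)..1, D y ^ 2 with hSdef
  have hSnn : 0 ≤ S :=
    intervalIntegral.integral_nonneg h01 fun y _ => sq_nonneg _
  have hCS : (∫ y in (0:ℝ)..1, |D y|) ≤ Real.sqrt S := by
    refine le_of_forall_pos_le_add fun ε hε => ?_
    set t : ℝ := Real.sqrt S + ε with ht
    have htpos : 0 < t := lt_of_lt_of_le hε (le_add_of_nonneg_left (Real.sqrt_nonneg _))
    have hptwise : ∀ y, |D y| ≤ D y ^ 2 / (2 * t) + t / 2 := by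
      intro y
      have h2t : (0:ℝ) < 2 * t := by positivity
      have key : |D y| * (2 * t) ≤ D y ^ 2 + t * t := by
        nlinarith [sq_nonneg (|D y| - t), sq_abs (D y)]
      calc |D y| = |D y| * (2 * t) / (2 * t) := by field_simp
        _ ≤ (D y ^ 2 + t * t) / (2 * t) := by gcongr
        _ = D y ^ 2 / (2 * t) + t / 2 := by field_simp
    have h1 : (∫ y in (0:ℝ)..1, |D y|) ≤ ∫ y in (0:ℝ)..1, (D y ^ 2 / (2 * t) + t / 2) := by
      refine intervalIntegral.integral_mono_on h01 hDabsint ?_ fun y _ => hptwise y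
      exact (hD2int.div_const _).add intervalIntegrable_const
    have h2 : (∫ y in (0:ℝ)..1, (D y ^ 2 / (2 * t) + t / 2)) = S / (2 * t) + t / 2 := by
      rw [intervalIntegral.integral_add (hD2int.div_const _) intervalIntegrable_const,
        intervalIntegral.integral_div, intervalIntegral.integral_const]
      simp
      rfl
    have h3 : S / (2 * t) ≤ Real.sqrt S / 2 := by
      rw [div_le_div_iff₀ (by positivity) (two_pos)]
      have : S = Real.sqrt S * Real.sqrt S := (Real.mul_self_sqrt hSnn).symm
      nlinarith [Real.sqrt_nonneg S]
    calc (∫ y in (0:ℝ)..1, |D y|) ≤ S / (2 * t) + t / 2 := h2 ▸ h1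
      _ ≤ Real.sqrt S / 2 + (Real.sqrt S + ε) / 2 := by linarith
      _ ≤ Real.sqrt S + ε := by linarith
  -- conclude
  have hC1 : (1:ℝ) ≤ max ((Cbar / M) ^ r) 1 := le_max_right _ _
  have hsqrtnn : 0 ≤ Real.sqrt S := Real.sqrt_nonneg _
  calc v x ^ r = g x := rfl
    _ ≤ g x₀ + ∫ y in (0:ℝ)..1, |D y| := hmain
    _ ≤ (Cbar / M) ^ r + Real.sqrt S := add_le_add hgx₀ hCS
    _ ≤ max ((Cbar / M) ^ r) 1 * Real.sqrt S + max ((Cbar / M) ^ r) 1 := by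
        have h4 : Real.sqrt S ≤ max ((Cbar / M) ^ r) 1 * Real.sqrt S :=
          le_mul_of_one_le_left hsqrtnn hC1
        have h5 : (Cbar / M) ^ r ≤ max ((Cbar / M) ^ r) 1 := le_max_left _ _
        linarith
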